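/- arXiv:2602.22810 — 3 statements merged into one kernel-verified Lean document; each statement's English description precedes it below -/
import Mathlib

section
/- Let $\{X_k\}_{k=1}^K$ be a sequence of random variables adapted so that $X_1,\dots,X_{k-1}$ are $\mathcal{F}_k$-measurable, with $0 \le X_k \le 1$ almost surely. Then with probability at least $1-\delta$, simultaneously for all $k \in [K]$, $\sum_{s=1}^k X_s \le 2\sum_{s=1}^k \mathbb{E}[X_s \mid \mathcal{F}_s] + \log(1/\delta)$. -/
open MeasureTheory

theorem stmt0 {Ω : Type*} {m0 : MeasurableSpace Ω} (μ : Measure Ω) [IsProbabilityMeasure μ]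
    (ℱ : Filtration ℕ m0) (K : ℕ) (X : ℕ → Ω → ℝ)
    (hadapt : ∀ k s, s < k → StronglyMeasurable[ℱ k] (X s))
    (hbdd : ∀ k, ∀ᵐ ω ∂μ, 0 ≤ X k ω ∧ X k ω ≤ 1)
    (δ : ℝ) (hδ : δ ∈ Set.Ioo (0:ℝ) 1) :
    ENNReal.ofReal (1 - δ) ≤
      μ {ω | ∀ k ∈ Finset.Icc 1 K,
        ∑ s ∈ Finset.Icc 1 k, X s ω
          ≤ 2 * ∑ s ∈ Finset.Icc 1 k, (μ[X s | ℱ s]) ω + Real.log (1 / δ)} := by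
  obtain ⟨hδ0, hδ1⟩ := hδ
  -- shifted filtration
  set G : Filtration ℕ m0 :=
    { seq := fun n => ℱ (n + 1)
      mono' := fun i j h => ℱ.mono (by omega)
      le' := fun n => ℱ.le _ } with hG
  set T : ℕ → Ω → ℝ := fun s => μ[X s | ℱ s] with hT
  set Y : ℕ → Ω → ℝ :=
    fun k ω => Real.exp (∑ s ∈ Finset.Icc 1 k, (X s ω - 2 * T s ω)) with hY
  have hXmeas : ∀ s, StronglyMeasurable[ℱ (s + 1)] (X s) :=
    fun s => hadapt (s + 1) s (lt_add_one s)
  have hXint : ∀ s, Integrable (X s) μ := by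
    intro s
    refine Integrable.mono' (integrable_const 1)
      (((hXmeas s).mono (ℱ.le _)).aestronglyMeasurable) ?_
    filter_upwards [hbdd s] with ω h
    rw [Real.norm_eq_abs, abs_le]; constructor <;> linarith [h.1, h.2]
  have hTnonneg : ∀ s, 0 ≤ᵐ[μ] T s := by
    intro s
    exact condExp_nonneg (by filter_upwards [hbdd s] with ω h using h.1)
  have hTint : ∀ s, Integrable (T s) μ := fun s => integrable_condExp
  -- measurability of Y
  have hYmeas : ∀ k, StronglyMeasurable[G k] (Y k) := by
    intro k
    have hsum : StronglyMeasurable[G k]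
        (fun ω => ∑ s ∈ Finset.Icc 1 k, (X s ω - 2 * T s ω)) := by
      refine Finset.stronglyMeasurable_fun_sum _ ?_
      intro s hs
      rw [Finset.mem_Icc] at hs
      have h1 : StronglyMeasurable[G k] (X s) := (hadapt (k + 1) s (by omega))
      have h2 : StronglyMeasurable[G k] (T s) :=
        stronglyMeasurable_condExp.mono (ℱ.mono (by omega))
      exact h1.sub (h2.const_mul 2)
    exact Real.continuous_exp.comp_stronglyMeasurable hsum
  have hadapted : StronglyAdapted G Y := fun k => hYmeas k
  -- a.e. bound on Y
  have hYbound : ∀ k, ∀ᵐ ω ∂μ, Y k ω ≤ Real.exp k := by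
    intro k
    have hall : ∀ᵐ ω ∂μ, ∀ s, (0 ≤ X s ω ∧ X s ω ≤ 1) ∧ 0 ≤ T s ω :=
      ae_all_iff.2 fun s => (hbdd s).and (hTnonneg s)
    filter_upwards [hall] with ω h
    have hsum : ∑ s ∈ Finset.Icc 1 k, (X s ω - 2 * T s ω) ≤ (k : ℝ) := by
      calc ∑ s ∈ Finset.Icc 1 k, (X s ω - 2 * T s ω)
          ≤ ∑ s ∈ Finset.Icc 1 k, (1 : ℝ) := by
            refine Finset.sum_le_sum fun s _ => ?_
            have := (h s).1; have := (h s).2; nlinarith [(h s).1.2, (h s).2]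
        _ = (Finset.Icc 1 k).card • (1:ℝ) := by rw [Finset.sum_const]
        _ ≤ (k : ℝ) := by
            simp [Nat.card_Icc]
    exact Real.exp_le_exp.2 hsum
  have hYint : ∀ k, Integrable (Y k) μ := by
    intro k
    refine Integrable.mono' (integrable_const (Real.exp k))
      ((hYmeas k).mono (G.le _)).aestronglyMeasurable ?_
    filter_upwards [hYbound k] with ω h
    rw [Real.norm_eq_abs, abs_of_pos (Real.exp_pos _)]
    exact h
  -- the supermartingale step
  have hstep : ∀ k, μ[Y (k + 1) | G k] ≤ᵐ[μ] Y k := by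
    intro k
    set m := ℱ (k + 1) with hm
    have hGk : G k = m := rfl
    set g : Ω → ℝ := fun ω => Real.exp (X (k + 1) ω) with hg
    set f : Ω → ℝ := fun ω => Y k ω * Real.exp (-(2 * T (k + 1) ω)) with hf
    have hfactor : Y (k + 1) = f * g := by
      funext ω
      simp only [hY, hf, hg, Pi.mul_apply]
      rw [Finset.sum_Icc_succ_top (by omega : 1 ≤ k + 1), Real.exp_add,
        sub_eq_add_neg (X (k + 1) ω), Real.exp_add]
      ring
    have hfmeas : StronglyMeasurable[m] f := by
      refine (hYmeas k).mul ?_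
      refine Real.continuous_exp.comp_stronglyMeasurable ?_
      exact ((stronglyMeasurable_condExp.const_mul 2).neg)
    have hgbound : ∀ᵐ ω ∂μ, ‖g ω‖ ≤ Real.exp 1 := by
      filter_upwards [hbdd (k + 1)] with ω h
      rw [Real.norm_eq_abs, abs_of_pos (Real.exp_pos _)]
      exact Real.exp_le_exp.2 h.2
    have hgmeas : AEStronglyMeasurable[m0] g μ :=
      (Real.continuous_exp.comp_stronglyMeasurable
        ((hXmeas (k + 1)).mono (ℱ.le _))).aestronglyMeasurable
    have hgint : Integrable g μ :=
      Integrable.mono' (integrable_const (Real.exp 1)) hgmeas hgbound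
    have hfgint : Integrable (f * g) μ := hfactor ▸ hYint (k + 1)
    have hpull : μ[Y (k + 1) | m] =ᵐ[μ] f * μ[g | m] := by
      rw [hfactor]
      exact condExp_mul_of_stronglyMeasurable_left hfmeas hfgint hgint
    -- exp x ≤ 1 + (e-1) x for x ∈ [0,1]
    have hexp_le : ∀ x : ℝ, 0 ≤ x → x ≤ 1 → Real.exp x ≤ 1 + (Real.exp 1 - 1) * x := by
      intro x hx0 hx1
      have h := convexOn_exp.2 (Set.mem_univ (0:ℝ)) (Set.mem_univ (1:ℝ))
        (by linarith : (0:ℝ) ≤ 1 - x) hx0 (by ring)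
      simp only [smul_eq_mul, mul_zero, mul_one, zero_add, Real.exp_zero] at h
      nlinarith [h]
    set h1 : Ω → ℝ := fun ω => 1 + (Real.exp 1 - 1) * X (k + 1) ω with hh1
    have hh1int : Integrable h1 μ :=
      (integrable_const (1:ℝ)).add ((hXint (k + 1)).const_mul _)
    have hmono : μ[g | m] ≤ᵐ[μ] μ[h1 | m] := by
      refine condExp_mono hgint hh1int ?_
      filter_upwards [hbdd (k + 1)] with ω h
      exact hexp_le _ h.1 h.2
    have hcond_h1 : μ[h1 | m] =ᵐ[μ] fun ω => 1 + (Real.exp 1 - 1) * T (k + 1) ω := by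
      have e1 : μ[h1 | m] =ᵐ[μ]
          μ[(fun _ => (1:ℝ)) | m] + μ[(Real.exp 1 - 1) • X (k + 1) | m] := by
        have : h1 = (fun _ => (1:ℝ)) + (Real.exp 1 - 1) • X (k + 1) := by
          funext ω
          simp only [hh1, Pi.add_apply, Pi.smul_apply, smul_eq_mul]
        rw [this]
        exact condExp_add (integrable_const _) ((hXint (k + 1)).smul (Real.exp 1 - 1)) m
      have e2 : μ[(Real.exp 1 - 1) • X (k + 1) | m] =ᵐ[μ]
          (Real.exp 1 - 1) • μ[X (k + 1) | m] := condExp_smul _ _ _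
      have e3 : μ[(fun _ => (1:ℝ)) | m] = fun _ => (1:ℝ) := condExp_const (ℱ.le _) _
      filter_upwards [e1, e2] with ω h1' h2'
      rw [h1']
      simp only [Pi.add_apply, e3, h2', Pi.smul_apply, smul_eq_mul]
      rfl
    have hTbd : ∀ t : ℝ, 0 ≤ t →
        Real.exp (-(2 * t)) * (1 + (Real.exp 1 - 1) * t) ≤ 1 := by
      intro t ht
      have he : Real.exp 1 < 2.7182818286 := Real.exp_one_lt_d9
      have h2t : 2 * t + 1 ≤ Real.exp (2 * t) := Real.add_one_le_exp _
      have hpos : 0 < Real.exp (2 * t) := Real.exp_pos _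
      rw [Real.exp_neg, inv_mul_le_iff₀ hpos]
      nlinarith
    filter_upwards [hpull, hmono, hcond_h1, hTnonneg (k + 1)] with ω hp hmn hc ht
    have ht' : (0:ℝ) ≤ T (k + 1) ω := ht
    rw [hp]
    have hfnn : 0 ≤ f ω := by
      simp only [hf, hY]
      positivity
    calc f ω * (μ[g | m]) ω ≤ f ω * (1 + (Real.exp 1 - 1) * T (k + 1) ω) := by
          refine mul_le_mul_of_nonneg_left ?_ hfnn
          calc (μ[g | m]) ω ≤ (μ[h1 | m]) ω := hmn
            _ = 1 + (Real.exp 1 - 1) * T (k + 1) ω := hc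
      _ = Y k ω * (Real.exp (-(2 * T (k + 1) ω)) * (1 + (Real.exp 1 - 1) * T (k + 1) ω)) := by
          simp only [hf]; ring
      _ ≤ Y k ω * 1 := by
          refine mul_le_mul_of_nonneg_left (hTbd _ ht') ?_
          exact (Real.exp_pos _).le
      _ = Y k ω := mul_one _
  have hsuper : Supermartingale Y G μ := supermartingale_nat hadapted hYint hstep
  -- Ville's inequality
  set τ : Ω → ℕ∞ := fun ω => (hittingBtwn Y (Set.Ici (1 / δ)) 0 K ω : ℕ) with hτdef
  have hτ : IsStoppingTime G τ :=
    hsuper.stronglyAdapted.adapted.isStoppingTime_hittingBtwn measurableSet_Ici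
  have hτle : ∀ ω, τ ω ≤ K := fun ω => by
    show ((hittingBtwn Y (Set.Ici (1 / δ)) 0 K ω : ℕ) : ℕ∞) ≤ K
    exact_mod_cast (hittingBtwn_le (u := Y) (s := Set.Ici (1 / δ)) (n := 0) (m := K) ω)
  have hsvint : Integrable (stoppedValue Y τ) μ :=
    integrable_stoppedValue ℕ hτ hsuper.integrable hτle
  have hY0 : Y 0 = fun _ => (1:ℝ) := by
    funext ω; simp [hY]
  have hEsv : ∫ ω, stoppedValue Y τ ω ∂μ ≤ 1 := by
    have hmono := (hsuper.neg).expected_stoppedValue_mono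
      (isStoppingTime_const G 0) hτ (fun ω => zero_le) hτle
    have e0 : stoppedValue (-Y) (fun _ => ((0:ℕ):ℕ∞)) = fun ω => -(Y 0 ω) := rfl
    have eτ : stoppedValue (-Y) τ = fun ω => -(stoppedValue Y τ ω) := rfl
    change ∫ ω, -(Y 0 ω) ∂μ ≤ ∫ ω, -(stoppedValue Y τ ω) ∂μ at hmono
    rw [integral_neg, integral_neg, neg_le_neg_iff] at hmono
    calc ∫ ω, stoppedValue Y τ ω ∂μ ≤ ∫ ω, Y 0 ω ∂μ := hmono
      _ = 1 := by rw [hY0]; simp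
  set A : Set Ω := {ω | ∃ j ∈ Set.Icc 0 K, Y j ω ∈ Set.Ici (1 / δ)} with hA
  have hAmeas : MeasurableSet A := by
    have : A = ⋃ j ∈ Set.Icc 0 K, Y j ⁻¹' Set.Ici (1 / δ) := by
      ext ω; simp [hA]
    rw [this]
    refine MeasurableSet.biUnion (Set.to_countable _) fun j _ => ?_
    exact ((hYmeas j).mono (G.le _)).measurable measurableSet_Ici
  have hsv_ge : ∀ ω ∈ A, 1 / δ ≤ stoppedValue Y τ ω := by
    intro ω hω
    exact stoppedValue_hittingBtwn_mem hω
  have hineq : 1 / δ * (μ A).toReal ≤ 1 := by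
    calc 1 / δ * (μ A).toReal ≤ ∫ ω in A, stoppedValue Y τ ω ∂μ :=
          by
            have := setIntegral_ge_of_const_le hAmeas (measure_ne_top μ A) hsv_ge
              hsvint.integrableOn
            rw [smul_eq_mul, mul_comm] at this
            exact this
      _ ≤ ∫ ω, stoppedValue Y τ ω ∂μ :=
          setIntegral_le_integral hsvint
            (ae_of_all μ fun ω => (Real.exp_pos _).le)
      _ ≤ 1 := hEsv
  have hμA : μ A ≤ ENNReal.ofReal δ := by
    have htoReal : (μ A).toReal ≤ δ := by
      rw [div_mul_eq_mul_div, one_mul, div_le_one hδ0] at hineq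
      exact hineq
    rw [← ENNReal.ofReal_toReal (measure_ne_top μ A)]
    exact ENNReal.ofReal_le_ofReal htoReal
  -- conclude
  have hsubset : Aᶜ ⊆ {ω | ∀ k ∈ Finset.Icc 1 K,
      ∑ s ∈ Finset.Icc 1 k, X s ω
        ≤ 2 * ∑ s ∈ Finset.Icc 1 k, (μ[X s | ℱ s]) ω + Real.log (1 / δ)} := by
    intro ω hω k hk
    rw [Finset.mem_Icc] at hk
    have hYk : Y k ω < 1 / δ := by
      by_contra hcon
      push_neg at hcon
      exact hω ⟨k, ⟨Nat.zero_le _, hk.2⟩, hcon⟩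
    have hlog : ∑ s ∈ Finset.Icc 1 k, (X s ω - 2 * T s ω) ≤ Real.log (1 / δ) := by
      rw [Real.le_log_iff_exp_le (by positivity)]
      exact hYk.le
    have hsum : ∑ s ∈ Finset.Icc 1 k, (X s ω - 2 * T s ω)
        = ∑ s ∈ Finset.Icc 1 k, X s ω - 2 * ∑ s ∈ Finset.Icc 1 k, T s ω := by
      rw [Finset.sum_sub_distrib, Finset.mul_sum]
    rw [hsum] at hlog
    simp only [hT] at hlog
    linarith
  calc ENNReal.ofReal (1 - δ) = 1 - ENNReal.ofReal δ := by
        rw [ENNReal.ofReal_sub _ hδ0.le, ENNReal.ofReal_one]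
    _ ≤ 1 - μ A := tsub_le_tsub_left hμA 1
    _ = μ Aᶜ := (prob_compl_eq_one_sub hAmeas).symm
    _ ≤ _ := measure_mono hsubset
end

section
/- (Feature-level change of measure.) Let $W: \mathcal{X} \to [0, W_{\max}]$ be any nonnegative function. Under the linear Markov game assumption (transition kernel of the form $P(x'|x,a,\pi^{-n}_E) = \phi(x,a)^\top M(x')$ with $\|\sum_x M(x) W(x)\| \le B W_{\max}$), for any deviation policy $\pi^n_\star$: $\sum_{h=1}^H \mathbb{E}_{X \sim \nu_h^{\pi^n_\star, \pi^{-n}_E}}[W(X)] \le \sum_{h=1}^H \|\phi_{h-1}^{\pi^n_\star, \pi^{-n}_E}\|_{(\Lambda^n_{E,h-1})^{-1}} \sqrt{\mathbb{E}_{X \sim \nu_h^{\pi_E}}[W^2(X)] + \lambda B^2 W_{\max}^2}$. -/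
open Matrix

namespace Stmt4Aux

variable {n : Type*} [Fintype n]

lemma vecMulVec_mulVec' (v w x : n → ℝ) :
    vecMulVec v w *ᵥ x = (w ⬝ᵥ x) • v := by
  ext i
  simp [mulVec, dotProduct, vecMulVec_apply, Finset.mul_sum, Finset.sum_mul,
    mul_comm, mul_assoc, mul_left_comm]

lemma sum_mulVec' {ι : Type*} (s : Finset ι) (f : ι → Matrix n n ℝ) (x : n → ℝ) :
    (∑ i ∈ s, f i) *ᵥ x = ∑ i ∈ s, f i *ᵥ x := by
  induction s using Finset.cons_induction with
  | empty => simp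
  | cons i s hi ih => simp [Finset.sum_cons, add_mulVec, ih]

lemma dot_symm {Λ : Matrix n n ℝ} (hΛ : Λᵀ = Λ) (x y : n → ℝ) :
    x ⬝ᵥ (Λ *ᵥ y) = y ⬝ᵥ (Λ *ᵥ x) := by
  rw [dotProduct_mulVec, ← mulVec_transpose, hΛ, dotProduct_comm]

lemma herm_transpose {Λ : Matrix n n ℝ} (hΛ : Λ.IsHermitian) : Λᵀ = Λ := by
  have := hΛ
  rw [Matrix.IsHermitian] at this
  ext i j
  have h2 := congrFun (congrFun this j) i
  simp only [conjTranspose_apply, star_trivial] at h2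
  rw [transpose_apply, ← h2]

lemma posSemidef_smul_vecMulVec {c : ℝ} (hc : 0 ≤ c) (v : n → ℝ) :
    (c • vecMulVec v v).PosSemidef := by
  rw [posSemidef_iff_dotProduct_mulVec]
  constructor
  · ext i j
    simp [conjTranspose_apply, vecMulVec_apply, mul_comm]
  · intro x
    have h1 : (c • vecMulVec v v) *ᵥ x = c • ((v ⬝ᵥ x) • v) := by
      rw [smul_mulVec, vecMulVec_mulVec']
    rw [star_trivial, h1]
    simp only [dotProduct_smul, smul_eq_mul]
    rw [dotProduct_comm x v]
    exact mul_nonneg hc (mul_self_nonneg _)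

lemma posSemidef_sum {ι : Type*} (s : Finset ι) (f : ι → Matrix n n ℝ)
    (h : ∀ i ∈ s, (f i).PosSemidef) : (∑ i ∈ s, f i).PosSemidef := by
  induction s using Finset.cons_induction with
  | empty => simpa using Matrix.PosSemidef.zero
  | cons i s hi ih =>
      rw [Finset.sum_cons]
      exact (h i (Finset.mem_cons_self i s)).add (ih fun j hj => h j (Finset.mem_cons_of_mem hj))

lemma posDef_smul_one [DecidableEq n] {c : ℝ} (hc : 0 < c) :
    (c • (1 : Matrix n n ℝ)).PosDef := by
  rw [posDef_iff_dotProduct_mulVec]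
  constructor
  · ext i j
    simp [conjTranspose_apply, Matrix.one_apply, eq_comm]
  · intro x hx
    rw [star_trivial, smul_mulVec, one_mulVec, dotProduct_smul, smul_eq_mul]
    have hxx : 0 < x ⬝ᵥ x := by
      have h0 : 0 ≤ x ⬝ᵥ x := by
        simp only [dotProduct]
        exact Finset.sum_nonneg fun i _ => mul_self_nonneg _
      rcases h0.lt_or_eq with h | h
      · exact h
      · exfalso; apply hx; ext i
        simp only [Pi.zero_apply]
        by_contra hxi
        have : 0 < x ⬝ᵥ x := by
          simp only [dotProduct]
          apply Finset.sum_pos' (fun j _ => mul_self_nonneg _)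
          exact ⟨i, Finset.mem_univ i, mul_self_pos.mpr hxi⟩
        linarith
    exact mul_pos hc hxx

lemma matrix_cs [DecidableEq n] {Λ : Matrix n n ℝ} (hΛ : Λ.PosDef) (u θ : n → ℝ) :
    u ⬝ᵥ θ ≤ Real.sqrt (u ⬝ᵥ (Λ⁻¹ *ᵥ u)) * Real.sqrt (θ ⬝ᵥ (Λ *ᵥ θ)) := by
  have hdet : IsUnit Λ.det := hΛ.det_pos.ne'.isUnit
  have hsymm : Λᵀ = Λ := herm_transpose hΛ.1
  set v : n → ℝ := Λ⁻¹ *ᵥ u with hv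
  have hΛv : Λ *ᵥ v = u := by
    rw [hv, mulVec_mulVec, mul_nonsing_inv _ hdet, one_mulVec]
  set a : ℝ := u ⬝ᵥ (Λ⁻¹ *ᵥ u) with ha
  set b : ℝ := u ⬝ᵥ θ with hb
  set c : ℝ := θ ⬝ᵥ (Λ *ᵥ θ) with hc
  have hva : v ⬝ᵥ u = a := by rw [ha, hv, dotProduct_comm]
  have hq : ∀ t : ℝ, 0 ≤ a * (t * t) + (-2 * b) * t + c := by
    intro t
    have h0 := hΛ.posSemidef.dotProduct_mulVec_nonneg (t • v - θ)
    rw [star_trivial] at h0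
    have expand : (t • v - θ) ⬝ᵥ (Λ *ᵥ (t • v - θ)) = a * (t * t) + (-2 * b) * t + c := by
      have e1 : Λ *ᵥ (t • v - θ) = t • u - Λ *ᵥ θ := by
        rw [mulVec_sub, mulVec_smul, hΛv]
      rw [e1]
      have e2 : v ⬝ᵥ (Λ *ᵥ θ) = b := by
        rw [dot_symm hsymm, hΛv, dotProduct_comm, ← hb]
      have e3 : θ ⬝ᵥ (t • u) = t * b := by
        rw [dotProduct_smul, smul_eq_mul, dotProduct_comm, ← hb]
      have e4 : θ ⬝ᵥ u = b := by rw [dotProduct_comm, ← hb]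
      simp only [sub_dotProduct, dotProduct_sub, smul_dotProduct, dotProduct_smul,
        smul_eq_mul, hva, e2, e3, e4, hc]
      ring
    linarith [expand ▸ h0]
  have hd := discrim_le_zero hq
  rw [discrim] at hd
  have hb2ac : b ^ 2 ≤ a * c := by nlinarith
  have ha0 : 0 ≤ a := by
    have := (hΛ.inv).posSemidef.dotProduct_mulVec_nonneg u
    rwa [star_trivial] at this
  have hc0 : 0 ≤ c := by
    have := hΛ.posSemidef.dotProduct_mulVec_nonneg θ
    rwa [star_trivial] at this
  calc b ≤ |b| := le_abs_self b
    _ = Real.sqrt (b ^ 2) := (Real.sqrt_sq_eq_abs b).symm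
    _ ≤ Real.sqrt (a * c) := Real.sqrt_le_sqrt hb2ac
    _ = Real.sqrt a * Real.sqrt c := Real.sqrt_mul ha0 c


lemma dotProduct_sum' {ι : Type*} (s : Finset ι) (x : n → ℝ) (f : ι → n → ℝ) :
    x ⬝ᵥ (∑ i ∈ s, f i) = ∑ i ∈ s, x ⬝ᵥ f i := by
  induction s using Finset.cons_induction with
  | empty => simp
  | cons i s hi ih => simp [Finset.sum_cons, dotProduct_add, ih]

lemma swap3 {X A : Type*} [Fintype X] [Fintype A] (P : X → A → X → ℝ) (c1 : X → A → ℝ)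
    (c2 : X → ℝ) (W : X → ℝ) :
    ∑ x, (∑ x', ∑ a, P x' a x * c1 x' a * c2 x') * W x
      = ∑ x', ∑ a, (c1 x' a * c2 x') * (∑ x, P x' a x * W x) := by
  simp only [Finset.sum_mul, Finset.mul_sum]
  rw [Finset.sum_comm]
  refine Finset.sum_congr rfl fun x' _ => ?_
  rw [Finset.sum_comm]
  exact Finset.sum_congr rfl fun a _ => Finset.sum_congr rfl fun x _ => by ring

lemma dot_theta {X : Type*} [Fintype X] {d : ℕ} (φv : Fin d → ℝ) (M : X → Fin d → ℝ)
    (W : X → ℝ) :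
    ∑ x, (φv ⬝ᵥ M x) * W x = φv ⬝ᵥ (fun i => ∑ x, M x i * W x) := by
  simp only [dotProduct, Finset.sum_mul, Finset.mul_sum]
  rw [Finset.sum_comm]
  exact Finset.sum_congr rfl fun i _ => Finset.sum_congr rfl fun x _ => by ring

lemma dot_u {X A : Type*} [Fintype X] [Fintype A] {d : ℕ} (c : X → A → ℝ)
    (φ : X → A → Fin d → ℝ) (θ : Fin d → ℝ) :
    ∑ x', ∑ a, c x' a * (φ x' a ⬝ᵥ θ)
      = (fun i => ∑ x', ∑ a, c x' a * φ x' a i) ⬝ᵥ θ := by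
  simp only [dotProduct, Finset.mul_sum, Finset.sum_mul]
  calc ∑ x', ∑ a, ∑ i, c x' a * (φ x' a i * θ i)
      = ∑ x', ∑ i, ∑ a, c x' a * (φ x' a i * θ i) :=
        Finset.sum_congr rfl fun _ _ => Finset.sum_comm
    _ = ∑ i, ∑ x', ∑ a, c x' a * (φ x' a i * θ i) := Finset.sum_comm
    _ = ∑ i, ∑ x', ∑ a, c x' a * φ x' a i * θ i := by
        exact Finset.sum_congr rfl fun _ _ => Finset.sum_congr rfl fun _ _ =>
          Finset.sum_congr rfl fun _ _ => by ring

lemma jensen {X : Type*} [Fintype X] (p W : X → ℝ) (hp : ∀ x, 0 ≤ p x)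
    (hs : ∑ x, p x = 1) :
    (∑ x, p x * W x) ^ 2 ≤ ∑ x, p x * W x ^ 2 := by
  have h := Finset.sum_mul_sq_le_sq_mul_sq Finset.univ (fun x => Real.sqrt (p x))
    (fun x => Real.sqrt (p x) * W x)
  have e1 : ∀ x : X, Real.sqrt (p x) * (Real.sqrt (p x) * W x) = p x * W x := fun x => by
    rw [← mul_assoc, Real.mul_self_sqrt (hp x)]
  have e2 : ∀ x : X, Real.sqrt (p x) ^ 2 = p x := fun x => Real.sq_sqrt (hp x)
  have e3 : ∀ x : X, (Real.sqrt (p x) * W x) ^ 2 = p x * W x ^ 2 := fun x => by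
    rw [mul_pow, Real.sq_sqrt (hp x)]
  simp only [e1, e2, e3] at h
  rwa [hs, one_mul] at h

end Stmt4Aux

open Stmt4Aux in
/-- Feature-level change of measure (Lemma: change_of_measure).
The opponent is frozen to the expert, giving the linear kernel
`P(x | x', a, π_E^{-n}) = φ(x',a) ⬝ M x`.  `νdev` is the occupancy of the
deviation `πstar` (against the expert opponent), `νE` the expert occupancy. -/
theorem stmt4 {X A : Type*} [Fintype X] [Fintype A] {d : ℕ}
    (H : ℕ) (φ : X → A → Fin d → ℝ) (M : X → Fin d → ℝ)
    (W : X → ℝ) (Wmax B lam : ℝ) (hlam : 0 < lam) (hB : 0 ≤ B)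
    (hW0 : ∀ x, 0 ≤ W x) (hW1 : ∀ x, W x ≤ Wmax)
    (hMnorm : Real.sqrt (∑ i, (∑ x, M x i * W x) ^ 2) ≤ B * Wmax)
    (hker_nonneg : ∀ x' a x, 0 ≤ φ x' a ⬝ᵥ M x)
    (hker_sum : ∀ x' a, ∑ x, φ x' a ⬝ᵥ M x = 1)
    (πstar πE : ℕ → X → A → ℝ)
    (hπstar0 : ∀ h x a, 0 ≤ πstar h x a) (hπstar1 : ∀ h x, ∑ a, πstar h x a = 1)
    (hπE0 : ∀ h x a, 0 ≤ πE h x a) (hπE1 : ∀ h x, ∑ a, πE h x a = 1)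
    (νdev νE : ℕ → X → ℝ)
    (hinit : νdev 0 = νE 0) (hν0 : ∀ x, 0 ≤ νE 0 x) (hν1 : ∑ x, νE 0 x = 1)
    (hdev_rec : ∀ h x, νdev (h + 1) x
      = ∑ x', ∑ a, (φ x' a ⬝ᵥ M x) * πstar h x' a * νdev h x')
    (hE_rec : ∀ h x, νE (h + 1) x
      = ∑ x', ∑ a, (φ x' a ⬝ᵥ M x) * πE h x' a * νE h x') :
    ∑ h ∈ Finset.range H, ∑ x, νdev (h + 1) x * W x
      ≤ ∑ h ∈ Finset.range H,
          Real.sqrt ((fun i => ∑ x', ∑ a, πstar h x' a * νdev h x' * φ x' a i) ⬝ᵥ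
              ((lam • (1 : Matrix (Fin d) (Fin d) ℝ)
                  + ∑ x', ∑ a, (πE h x' a * νE h x') • vecMulVec (φ x' a) (φ x' a))⁻¹ *ᵥ
                (fun i => ∑ x', ∑ a, πstar h x' a * νdev h x' * φ x' a i)))
            * Real.sqrt ((∑ x, νE (h + 1) x * W x ^ 2) + lam * B ^ 2 * Wmax ^ 2) := by
  -- nonnegativity of the expert occupancy
  have hνE : ∀ h x, 0 ≤ νE h x := by
    intro h
    induction h with
    | zero => exact hν0
    | succ h ih =>
        intro x
        rw [hE_rec]
        exact Finset.sum_nonneg fun x' _ => Finset.sum_nonneg fun a _ =>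
          mul_nonneg (mul_nonneg (hker_nonneg _ _ _) (hπE0 _ _ _)) (ih x')
  -- X is nonempty, hence Wmax ≥ 0
  have hWmax0 : 0 ≤ Wmax := by
    have hne : (Finset.univ : Finset X).Nonempty := by
      by_contra hcon
      rw [Finset.not_nonempty_iff_eq_empty] at hcon
      rw [hcon, Finset.sum_empty] at hν1
      norm_num at hν1
    obtain ⟨x0, _⟩ := hne
    exact le_trans (hW0 x0) (hW1 x0)
  apply Finset.sum_le_sum
  intro h _
  set θ : Fin d → ℝ := fun i => ∑ x, M x i * W x with hθ
  set u : Fin d → ℝ := fun i => ∑ x', ∑ a, πstar h x' a * νdev h x' * φ x' a i with hu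
  set Λ : Matrix (Fin d) (Fin d) ℝ :=
    lam • (1 : Matrix (Fin d) (Fin d) ℝ)
      + ∑ x', ∑ a, (πE h x' a * νE h x') • vecMulVec (φ x' a) (φ x' a) with hΛ
  have hΛpd : Λ.PosDef := by
    rw [hΛ]
    refine Matrix.PosDef.add_posSemidef (posDef_smul_one hlam) ?_
    refine posSemidef_sum _ _ fun x' _ => ?_
    refine posSemidef_sum _ _ fun a _ => ?_
    exact posSemidef_smul_vecMulVec (mul_nonneg (hπE0 _ _ _) (hνE h x')) _
  -- LHS as a dot product
  have hLHS : ∑ x, νdev (h + 1) x * W x = u ⬝ᵥ θ := by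
    calc ∑ x, νdev (h + 1) x * W x
        = ∑ x, (∑ x', ∑ a, (φ x' a ⬝ᵥ M x) * πstar h x' a * νdev h x') * W x := by
          exact Finset.sum_congr rfl fun x _ => by rw [hdev_rec]
      _ = ∑ x', ∑ a, (πstar h x' a * νdev h x') * (∑ x, (φ x' a ⬝ᵥ M x) * W x) :=
          swap3 _ _ _ _
      _ = ∑ x', ∑ a, (πstar h x' a * νdev h x') * (φ x' a ⬝ᵥ θ) := by
          exact Finset.sum_congr rfl fun x' _ => Finset.sum_congr rfl fun a _ => by
            rw [dot_theta, hθ]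
      _ = u ⬝ᵥ θ := by rw [hu]; exact dot_u _ _ _
  -- quadratic form of Λ at θ
  have hquad : θ ⬝ᵥ (Λ *ᵥ θ)
      = lam * (θ ⬝ᵥ θ) + ∑ x', ∑ a, (πE h x' a * νE h x') * (φ x' a ⬝ᵥ θ) ^ 2 := by
    rw [hΛ, add_mulVec, dotProduct_add, smul_mulVec, one_mulVec, dotProduct_smul,
      smul_eq_mul]
    congr 1
    rw [sum_mulVec', dotProduct_sum']
    refine Finset.sum_congr rfl fun x' _ => ?_
    rw [sum_mulVec', dotProduct_sum']
    refine Finset.sum_congr rfl fun a _ => ?_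
    rw [smul_mulVec, vecMulVec_mulVec', dotProduct_smul, dotProduct_smul,
      smul_eq_mul, smul_eq_mul, dotProduct_comm θ (φ x' a)]
    ring
  -- bound on lam * θ⬝θ
  have hθnorm : θ ⬝ᵥ θ ≤ B ^ 2 * Wmax ^ 2 := by
    have h0 : (0 : ℝ) ≤ ∑ i, (∑ x, M x i * W x) ^ 2 :=
      Finset.sum_nonneg fun _ _ => sq_nonneg _
    have h1 : θ ⬝ᵥ θ = ∑ i, (∑ x, M x i * W x) ^ 2 := by
      rw [hθ]; simp [dotProduct, sq]
    rw [h1]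
    nlinarith [Real.sq_sqrt h0, Real.sqrt_nonneg (∑ i, (∑ x, M x i * W x) ^ 2)]
  -- bound on the covariance part
  have hsum2 : ∑ x', ∑ a, (πE h x' a * νE h x') * (φ x' a ⬝ᵥ θ) ^ 2
      ≤ ∑ x, νE (h + 1) x * W x ^ 2 := by
    have hPθ : ∀ x' a, φ x' a ⬝ᵥ θ = ∑ x, (φ x' a ⬝ᵥ M x) * W x := fun x' a => by
      rw [hθ]; exact (dot_theta _ _ _).symm
    have hle : ∑ x', ∑ a, (πE h x' a * νE h x') * (φ x' a ⬝ᵥ θ) ^ 2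
        ≤ ∑ x', ∑ a, (πE h x' a * νE h x') * (∑ x, (φ x' a ⬝ᵥ M x) * W x ^ 2) := by
      refine Finset.sum_le_sum fun x' _ => Finset.sum_le_sum fun a _ => ?_
      refine mul_le_mul_of_nonneg_left ?_ (mul_nonneg (hπE0 _ _ _) (hνE h x'))
      rw [hPθ]
      exact jensen _ _ (hker_nonneg x' a) (hker_sum x' a)
    refine hle.trans_eq ?_
    have hsw := swap3 (fun x' a x => φ x' a ⬝ᵥ M x) (πE h) (νE h) (fun x => W x ^ 2)
    simp only [← hE_rec] at hsw
    exact hsw.symm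
  calc ∑ x, νdev (h + 1) x * W x = u ⬝ᵥ θ := hLHS
    _ ≤ Real.sqrt (u ⬝ᵥ (Λ⁻¹ *ᵥ u)) * Real.sqrt (θ ⬝ᵥ (Λ *ᵥ θ)) := matrix_cs hΛpd u θ
    _ ≤ Real.sqrt (u ⬝ᵥ (Λ⁻¹ *ᵥ u))
          * Real.sqrt ((∑ x, νE (h + 1) x * W x ^ 2) + lam * B ^ 2 * Wmax ^ 2) := by
        refine mul_le_mul_of_nonneg_left (Real.sqrt_le_sqrt ?_) (Real.sqrt_nonneg _)
        rw [hquad]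
        have hmul : lam * (θ ⬝ᵥ θ) ≤ lam * (B ^ 2 * Wmax ^ 2) :=
          mul_le_mul_of_nonneg_left hθnorm hlam.le
        linarith
end

section
/- Under the conditions of the feature-level change-of-measure lemma, the covariance-weighted norm of the transition-weighted function vector satisfies $\|\sum_{x} M(x) W(x)\|^2_{\Lambda^n_{E,h-1}} \le \mathbb{E}_{X \sim \nu_h^{\pi_E}}[W^2(X)] + \lambda B^2 W_{\max}^2$, where the proof uses Jensen's inequality applied to $(\sum_x P(x|x',a,\pi^{-n}_E) W(x))^2 \le \sum_x P(x|x',a,\pi^{-n}_E) W^2(x)$. -/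
open Matrix

private lemma sum_mulVec' {n : ℕ} {ι : Type*} (s : Finset ι)
    (f : ι → Matrix (Fin n) (Fin n) ℝ) (v : Fin n → ℝ) :
    (∑ i ∈ s, f i) *ᵥ v = ∑ i ∈ s, f i *ᵥ v := by
  induction s using Finset.cons_induction with
  | empty => simp [Matrix.zero_mulVec]
  | cons a s ha ih => simp [Finset.sum_cons, Matrix.add_mulVec, ih]

private lemma dotProduct_sum' {n : ℕ} {ι : Type*} (s : Finset ι) (v : Fin n → ℝ)
    (f : ι → Fin n → ℝ) : v ⬝ᵥ (∑ i ∈ s, f i) = ∑ i ∈ s, v ⬝ᵥ f i := by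
  simp only [dotProduct, Finset.sum_apply, Finset.mul_sum]
  exact Finset.sum_comm

/-- The covariance-weighted norm of the transition-weighted function vector is
bounded by the next-step expert expectation of `W²` plus the regularization term. -/
theorem stmt5 {X A : Type*} [Fintype X] [Fintype A] {d : ℕ}
    (φ : X → A → Fin d → ℝ) (M : X → Fin d → ℝ) (p : X → A → X → ℝ)
    (hker : ∀ x' a x, φ x' a ⬝ᵥ M x = p x' a x)
    (hp0 : ∀ x' a x, 0 ≤ p x' a x) (hp1 : ∀ x' a, ∑ x, p x' a x = 1)
    (W : X → ℝ) (Wmax B lam : ℝ) (hlam : 0 ≤ lam)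
    (hW0 : ∀ x, 0 ≤ W x) (hW1 : ∀ x, W x ≤ Wmax)
    (hMnorm : ∑ i, (∑ x, M x i * W x) ^ 2 ≤ B ^ 2 * Wmax ^ 2)
    (πE : X → A → ℝ) (hπE0 : ∀ x a, 0 ≤ πE x a)
    (νprev : X → ℝ) (hνprev0 : ∀ x, 0 ≤ νprev x)
    (νh : X → ℝ)
    (hν : ∀ x, νh x = ∑ x', ∑ a, p x' a x * πE x' a * νprev x') :
    (fun i => ∑ x, W x * M x i) ⬝ᵥ
        ((lam • (1 : Matrix (Fin d) (Fin d) ℝ)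
            + ∑ x', ∑ a, (πE x' a * νprev x') • vecMulVec (φ x' a) (φ x' a)) *ᵥ
          (fun i => ∑ x, W x * M x i))
      ≤ (∑ x, νh x * W x ^ 2) + lam * B ^ 2 * Wmax ^ 2 := by
  classical
  set v : Fin d → ℝ := fun i => ∑ x, W x * M x i with hv
  have hφv : ∀ x' a, φ x' a ⬝ᵥ v = ∑ x, p x' a x * W x := by
    intro x' a
    simp only [dotProduct, hv, Finset.mul_sum]
    rw [Finset.sum_comm]
    refine Finset.sum_congr rfl fun x _ => ?_
    have h := hker x' a x
    simp only [dotProduct] at h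
    calc ∑ i, φ x' a i * (W x * M x i)
        = (∑ i, φ x' a i * M x i) * W x := by rw [Finset.sum_mul]; congr 1; ext i; ring
      _ = p x' a x * W x := by rw [h]
  have hLHS : v ⬝ᵥ ((lam • (1 : Matrix (Fin d) (Fin d) ℝ)
        + ∑ x', ∑ a, (πE x' a * νprev x') • vecMulVec (φ x' a) (φ x' a)) *ᵥ v)
      = lam * (∑ i, v i ^ 2)
        + ∑ x', ∑ a, (πE x' a * νprev x') * (φ x' a ⬝ᵥ v) ^ 2 := by
    rw [Matrix.add_mulVec, dotProduct_add]
    congr 1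
    · rw [Matrix.smul_mulVec, Matrix.one_mulVec, dotProduct_smul]
      simp [dotProduct, pow_two, smul_eq_mul]
    · rw [sum_mulVec', dotProduct_sum']
      refine Finset.sum_congr rfl fun x' _ => ?_
      rw [sum_mulVec', dotProduct_sum']
      refine Finset.sum_congr rfl fun a _ => ?_
      rw [Matrix.smul_mulVec, dotProduct_smul]
      have : v ⬝ᵥ (vecMulVec (φ x' a) (φ x' a) *ᵥ v) = (φ x' a ⬝ᵥ v) * (φ x' a ⬝ᵥ v) := by
        simp only [dotProduct, Matrix.mulVec, Matrix.vecMulVec_apply,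
          Finset.mul_sum, Finset.sum_mul]
        rw [Finset.sum_comm]
        exact Finset.sum_congr rfl fun i _ => Finset.sum_congr rfl fun j _ => by ring
      rw [this, smul_eq_mul, pow_two]
  rw [hLHS]
  have jensen : ∀ x' a, (∑ x, p x' a x * W x) ^ 2 ≤ ∑ x, p x' a x * W x ^ 2 := by
    intro x' a
    have h := Finset.sum_mul_sq_le_sq_mul_sq Finset.univ
      (fun x => Real.sqrt (p x' a x)) (fun x => Real.sqrt (p x' a x) * W x)
    have e1 : ∑ x, Real.sqrt (p x' a x) * (Real.sqrt (p x' a x) * W x) = ∑ x, p x' a x * W x := by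
      refine Finset.sum_congr rfl fun x _ => ?_
      rw [← mul_assoc, Real.mul_self_sqrt (hp0 x' a x)]
    have e2 : ∑ x, Real.sqrt (p x' a x) ^ 2 = 1 := by
      rw [← hp1 x' a]
      exact Finset.sum_congr rfl fun x _ => Real.sq_sqrt (hp0 x' a x)
    have e3 : ∑ x, (Real.sqrt (p x' a x) * W x) ^ 2 = ∑ x, p x' a x * W x ^ 2 := by
      refine Finset.sum_congr rfl fun x _ => ?_
      rw [mul_pow, Real.sq_sqrt (hp0 x' a x)]
    rw [e1, e2, e3, one_mul] at h
    exact h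
  have step1 : ∑ x', ∑ a, (πE x' a * νprev x') * (φ x' a ⬝ᵥ v) ^ 2
      ≤ ∑ x, νh x * W x ^ 2 := by
    have : ∑ x', ∑ a, (πE x' a * νprev x') * (φ x' a ⬝ᵥ v) ^ 2
        ≤ ∑ x', ∑ a, (πE x' a * νprev x') * ∑ x, p x' a x * W x ^ 2 := by
      refine Finset.sum_le_sum fun x' _ => Finset.sum_le_sum fun a _ => ?_
      rw [hφv x' a]
      exact mul_le_mul_of_nonneg_left (jensen x' a)
        (mul_nonneg (hπE0 x' a) (hνprev0 x'))
    refine this.trans_eq ?_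
    calc ∑ x', ∑ a, (πE x' a * νprev x') * ∑ x, p x' a x * W x ^ 2
        = ∑ x', ∑ a, ∑ x, p x' a x * πE x' a * νprev x' * W x ^ 2 := by
          refine Finset.sum_congr rfl fun x' _ => Finset.sum_congr rfl fun a _ => ?_
          rw [Finset.mul_sum]; exact Finset.sum_congr rfl fun x _ => by ring
      _ = ∑ x', ∑ x, ∑ a, p x' a x * πE x' a * νprev x' * W x ^ 2 :=
          Finset.sum_congr rfl fun _ _ => Finset.sum_comm
      _ = ∑ x, ∑ x', ∑ a, p x' a x * πE x' a * νprev x' * W x ^ 2 := Finset.sum_comm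
      _ = ∑ x, νh x * W x ^ 2 := by
          refine Finset.sum_congr rfl fun x _ => ?_
          rw [hν x, Finset.sum_mul]
          exact Finset.sum_congr rfl fun x' _ => by rw [Finset.sum_mul]
  have step2 : lam * (∑ i, v i ^ 2) ≤ lam * B ^ 2 * Wmax ^ 2 := by
    rw [mul_assoc]
    refine mul_le_mul_of_nonneg_left ?_ hlam
    refine le_trans ?_ hMnorm
    refine le_of_eq (Finset.sum_congr rfl fun i _ => ?_)
    congr 1
    exact Finset.sum_congr rfl fun x _ => mul_comm _ _
  linarith
end
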